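/- arXiv:2202.03928 — 4 statements merged into one kernel-verified Lean document; each statement's English description precedes it below -/
import Mathlib

section
/- Let T > 0, ρ ∈ ℝ and let d ≥ 1 be an integer. Then there exists a constant C > 0 (depending only on T, ρ and d) such that for every integer k ≥ 1 and every t ∈ (0, T], f_k(t) ≤ C^k · √(k!) / t^{(k−1)/2}. -/
open Real

lemma aux_pow_self (n : ℕ) : (n : ℝ) ^ n ≤ Real.exp 1 ^ n * n.factorial := by
  have h1 : (n : ℝ) ^ n / n.factorial ≤ Real.exp n := by
    calc (n:ℝ)^n / n.factorial
        ≤ ∑ i ∈ Finset.range (n+1), (n:ℝ)^i / i.factorial := by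
          exact Finset.single_le_sum (f := fun i => (n:ℝ)^i / (i.factorial : ℝ))
            (fun i _ => by positivity) (Finset.self_mem_range_succ n)
      _ ≤ Real.exp n := Real.sum_le_exp_of_nonneg (by positivity) _
  have hfac : (0:ℝ) < n.factorial := by exact_mod_cast n.factorial_pos
  have := (div_le_iff₀ hfac).mp h1
  calc (n:ℝ)^n ≤ Real.exp n * n.factorial := this
    _ = Real.exp 1 ^ n * n.factorial := by
        rw [← Real.exp_nat_mul, mul_one]

lemma sqrt_le_self' {y : ℝ} (hy : 1 ≤ y) : Real.sqrt y ≤ y := by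
  calc Real.sqrt y ≤ Real.sqrt (y^2) := Real.sqrt_le_sqrt (by nlinarith)
    _ = y := Real.sqrt_sq (by linarith)

lemma key_lemma (a E B t : ℝ) (k : ℕ) (hk : 1 ≤ k) (ht : 0 < t) (ha : 1 ≤ a)
    (hB : 2 ≤ k → 0 ≤ B) (hE : E ≤ a ^ k) (hBt : 2 ≤ k → B * t ≤ a * ((k : ℝ) - 1)) :
    E * B ^ (((k : ℝ) - 1) / 2) ≤
      (a ^ 2 * Real.exp 1) ^ k * Real.sqrt (Nat.factorial k) / t ^ (((k : ℝ) - 1) / 2) := by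
  have he1 : (1:ℝ) ≤ Real.exp 1 := by
    have := Real.add_one_le_exp (1:ℝ); linarith
  have ha0 : (0:ℝ) < a := by linarith
  rcases eq_or_lt_of_le hk with h1 | hk2
  · -- k = 1
    subst h1
    have h0 : (((1:ℕ):ℝ) - 1)/2 = 0 := by norm_num
    rw [h0, Real.rpow_zero, Real.rpow_zero, mul_one, pow_one, Nat.factorial_one,
      Nat.cast_one, Real.sqrt_one, mul_one, div_one]
    have : a ^ 1 = a := pow_one a
    nlinarith [hE]
  · have hk2 : 2 ≤ k := hk2
    have hB' := hB hk2
    have hBt' := hBt hk2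
    set n := k - 1 with hn_def
    have hkn : k = n + 1 := by omega
    have hn : (k:ℝ) - 1 = (n:ℝ) := by
      rw [hkn]; push_cast; ring
    have hm : (0:ℝ) < (k:ℝ) - 1 := by
      rw [hn]; exact_mod_cast Nat.pos_of_ne_zero (by omega)
    have hBtnn : 0 ≤ B * t := mul_nonneg hB' ht.le
    have hepos : (0:ℝ) ≤ ((k:ℝ)-1)/2 := by linarith
    have hconv : ∀ x : ℝ, 0 ≤ x → x ^ (((k:ℝ)-1)/2) = Real.sqrt (x ^ n) := by
      intro x hx
      rw [hn, show ((n:ℝ)/2) = (n:ℝ) * (1/2) by ring, Real.rpow_mul hx,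
        Real.rpow_natCast, Real.sqrt_eq_rpow]
    rw [le_div_iff₀ (Real.rpow_pos_of_pos ht (((k:ℝ)-1)/2))]
    have hmul : B ^ (((k:ℝ)-1)/2) * t ^ (((k:ℝ)-1)/2) = (B*t) ^ (((k:ℝ)-1)/2) :=
      (Real.mul_rpow hB' ht.le).symm
    rw [mul_assoc, hmul]
    have hfle : (n.factorial : ℝ) ≤ (k.factorial : ℝ) := by
      exact_mod_cast Nat.factorial_le (by omega : n ≤ k)
    have hsq : Real.sqrt ((a * ((k:ℝ)-1)) ^ n) ≤ a ^ n * Real.exp 1 ^ n * Real.sqrt k.factorial := by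
      have h1 : (a * ((k:ℝ)-1)) ^ n ≤ (a ^ n * Real.exp 1 ^ n) * k.factorial := by
        rw [hn, mul_pow]
        have h2 : ((n:ℝ)) ^ n ≤ Real.exp 1 ^ n * k.factorial := by
          calc ((n:ℝ)) ^ n ≤ Real.exp 1 ^ n * n.factorial := aux_pow_self n
            _ ≤ Real.exp 1 ^ n * k.factorial := by
                apply mul_le_mul_of_nonneg_left hfle (by positivity)
        calc a ^ n * ((n:ℝ)) ^ n ≤ a ^ n * (Real.exp 1 ^ n * k.factorial) := by
              apply mul_le_mul_of_nonneg_left h2 (by positivity)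
          _ = (a ^ n * Real.exp 1 ^ n) * k.factorial := by ring
      calc Real.sqrt ((a * ((k:ℝ)-1)) ^ n) ≤ Real.sqrt ((a ^ n * Real.exp 1 ^ n) * k.factorial) :=
            Real.sqrt_le_sqrt h1
        _ = Real.sqrt (a ^ n * Real.exp 1 ^ n) * Real.sqrt k.factorial := by
            rw [Real.sqrt_mul (by positivity)]
        _ ≤ (a ^ n * Real.exp 1 ^ n) * Real.sqrt k.factorial := by
            apply mul_le_mul_of_nonneg_right (sqrt_le_self' ?_) (Real.sqrt_nonneg _)
            have h1 := one_le_pow₀ ha (n := n); have h2 := one_le_pow₀ he1 (n := n); nlinarith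
    calc E * (B*t) ^ (((k:ℝ)-1)/2)
        ≤ a ^ k * (B*t) ^ (((k:ℝ)-1)/2) :=
          mul_le_mul_of_nonneg_right hE (Real.rpow_nonneg hBtnn _)
      _ ≤ a ^ k * (a * ((k:ℝ)-1)) ^ (((k:ℝ)-1)/2) := by
          apply mul_le_mul_of_nonneg_left
            (Real.rpow_le_rpow hBtnn hBt' hepos) (by positivity)
      _ = a ^ k * Real.sqrt ((a * ((k:ℝ)-1)) ^ n) := by
          rw [hconv _ (by positivity)]
      _ ≤ a ^ k * (a ^ n * Real.exp 1 ^ n * Real.sqrt k.factorial) := by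
          apply mul_le_mul_of_nonneg_left hsq (by positivity)
      _ ≤ a ^ k * (a ^ k * Real.exp 1 ^ k * Real.sqrt k.factorial) := by
          apply mul_le_mul_of_nonneg_left _ (by positivity)
          apply mul_le_mul_of_nonneg_right _ (Real.sqrt_nonneg _)
          exact mul_le_mul (pow_le_pow_right₀ ha (by omega)) (pow_le_pow_right₀ he1 (by omega))
            (by positivity) (by positivity)
      _ = (a ^ 2 * Real.exp 1) ^ k * Real.sqrt k.factorial := by ring

set_option maxHeartbeats 1000000 in
/-- For `ρ ∈ ℝ`, `d ≥ 1`, `k ≥ 1` and `t ∈ (0, T]`, the function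
`f_k(t) = exp(−ρ t max(1, k/2)) (ρd/(e^{2ρt/(k−1)} − 1))^{(k−1)/2}` if `ρ ≠ 0`,
`f_k(t) = (d(k−1)/(2t))^{(k−1)/2}` if `ρ = 0`, satisfies
`f_k(t) ≤ C^k √(k!) / t^{(k−1)/2}` for a constant `C` depending only on `T, ρ, d`. -/
theorem stmt_0 (T : ℝ) (hT : 0 < T) (ρ : ℝ) (d : ℕ) (hd : 1 ≤ d) :
    ∃ C : ℝ, 0 < C ∧ ∀ k : ℕ, 1 ≤ k → ∀ t : ℝ, 0 < t → t ≤ T →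
      (if ρ = 0 then ((d : ℝ) * ((k : ℝ) - 1) / (2 * t)) ^ (((k : ℝ) - 1) / 2)
        else Real.exp (-ρ * t * max 1 ((k : ℝ) / 2)) *
          (ρ * (d : ℝ) / (Real.exp (2 * ρ * t / ((k : ℝ) - 1)) - 1)) ^ (((k : ℝ) - 1) / 2))
      ≤ C ^ k * Real.sqrt (Nat.factorial k) / t ^ (((k : ℝ) - 1) / 2) := by
  have hd1 : (1:ℝ) ≤ d := by exact_mod_cast hd
  have hexp1 : (1:ℝ) ≤ Real.exp (2*|ρ| *T) := Real.one_le_exp (by positivity)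
  set a : ℝ := Real.exp (2*|ρ| *T) * d with ha_def
  have ha1 : 1 ≤ a := by nlinarith
  refine ⟨a^2 * Real.exp 1, mul_pos (pow_pos (by linarith : (0:ℝ) < a) 2) (Real.exp_pos 1), ?_⟩
  intro k hk t ht htT
  have hk1 : (1:ℝ) ≤ (k:ℝ) := by exact_mod_cast hk
  have hm0 : (0:ℝ) ≤ (k:ℝ)-1 := by linarith
  by_cases hρ : ρ = 0
  · rw [if_pos hρ]
    have := key_lemma a 1 ((d:ℝ)*((k:ℝ)-1)/(2*t)) t k hk ht ha1
      (fun _ => by positivity)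
      (one_le_pow₀ ha1)
      (fun hk2 => by
        have heq : (d:ℝ)*((k:ℝ)-1)/(2*t)*t = (d:ℝ)*((k:ℝ)-1)/2 := by
          field_simp
        rw [heq]
        nlinarith [mul_nonneg hm0 (by nlinarith : (0:ℝ) ≤ 2*a - (d:ℝ))])
    simpa using this
  · rw [if_neg hρ]
    have hρd : ρ ≠ 0 := hρ
    apply key_lemma a _ _ t k hk ht ha1 ?hB ?hE ?hBt
    case hE =>
      have hmax0 : (0:ℝ) ≤ max 1 ((k:ℝ)/2) := le_trans zero_le_one (le_max_left _ _)
      have hmax : max 1 ((k:ℝ)/2) ≤ (k:ℝ) := max_le hk1 (by linarith)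
      have harg : -ρ*t*max 1 ((k:ℝ)/2) ≤ (k:ℝ)*(2*|ρ| *T) := by
        have h1 : -ρ*t*max 1 ((k:ℝ)/2) ≤ |ρ| *(t*max 1 ((k:ℝ)/2)) := by
          have := neg_le_abs ρ
          nlinarith [mul_nonneg ht.le hmax0]
        have h2 : t*max 1 ((k:ℝ)/2) ≤ T*(k:ℝ) :=
          mul_le_mul htT hmax hmax0 hT.le
        have h3 : |ρ| *(t*max 1 ((k:ℝ)/2)) ≤ |ρ| *(T*(k:ℝ)) :=
          mul_le_mul_of_nonneg_left h2 (abs_nonneg ρ)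
        nlinarith [abs_nonneg ρ, mul_nonneg (mul_nonneg (abs_nonneg ρ) hT.le) (by linarith : (0:ℝ) ≤ (k:ℝ))]
      calc Real.exp (-ρ*t*max 1 ((k:ℝ)/2)) ≤ Real.exp ((k:ℝ)*(2*|ρ| *T)) :=
            Real.exp_le_exp.mpr harg
        _ = Real.exp (2*|ρ| *T) ^ k := Real.exp_nat_mul _ k
        _ ≤ a ^ k := by
            apply pow_le_pow_left₀ (Real.exp_pos _).le
            nlinarith
    case hB =>
      intro hk2
      have hm : (0:ℝ) < (k:ℝ)-1 := by
        have : (2:ℝ) ≤ (k:ℝ) := by exact_mod_cast hk2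
        linarith
      rcases hρd.lt_or_gt with hneg | hpos
      · rw [div_nonneg_iff]
        right
        constructor
        · nlinarith
        · have hx : 2*ρ*t/((k:ℝ)-1) < 0 :=
            div_neg_of_neg_of_pos (by nlinarith) hm
          have := Real.exp_lt_exp.mpr hx
          rw [Real.exp_zero] at this
          linarith
      · apply div_nonneg
        · nlinarith
        · have hx : 0 < 2*ρ*t/((k:ℝ)-1) := div_pos (by nlinarith) hm
          have := Real.exp_lt_exp.mpr hx
          rw [Real.exp_zero] at this
          linarith
    case hBt =>
      intro hk2
      have hm : (0:ℝ) < (k:ℝ)-1 := by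
        have : (2:ℝ) ≤ (k:ℝ) := by exact_mod_cast hk2
        linarith
      have hm1 : (1:ℝ) ≤ (k:ℝ)-1 := by
        have : (2:ℝ) ≤ (k:ℝ) := by exact_mod_cast hk2
        linarith
      set x : ℝ := 2*ρ*t/((k:ℝ)-1) with hx_def
      rcases hρd.lt_or_gt with hneg | hpos
      · -- ρ < 0
        have hxneg : x < 0 := div_neg_of_neg_of_pos (by nlinarith) hm
        have hden : Real.exp x - 1 < 0 := by
          have := Real.exp_lt_exp.mpr hxneg
          rw [Real.exp_zero] at this; linarith
        have hxbd : -(2*|ρ| *T) ≤ x := by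
          rw [hx_def, le_div_iff₀ hm, abs_of_neg hneg]
          nlinarith [mul_nonneg (sub_nonneg.mpr htT) (sub_nonneg.mpr hm1),
            mul_nonneg hT.le (sub_nonneg.mpr hm1)]
        have hP : (0:ℝ) < a*((k:ℝ)-1)/t := by positivity
        have hB'le : ρ*(d:ℝ)/(Real.exp x - 1) ≤ a*((k:ℝ)-1)/t := by
          rw [div_le_iff_of_neg hden]
          have hinv : Real.exp (-x) * Real.exp x = 1 := by
            rw [← Real.exp_add]; simp
          have h1 : Real.exp x - 1 ≤ x * Real.exp x := by
            nlinarith [Real.add_one_le_exp (-x), Real.exp_pos x]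
          have hamx : a*((k:ℝ)-1)/t * x = 2*ρ*(d:ℝ)*Real.exp (2*|ρ| *T) := by
            rw [ha_def, hx_def]; field_simp
          have h2 : 1 ≤ Real.exp (2*|ρ| *T) * Real.exp x := by
            rw [← Real.exp_add]; apply Real.one_le_exp; linarith
          have hρdneg : ρ*(d:ℝ) < 0 := by nlinarith
          have h3 : 2*ρ*(d:ℝ)*(Real.exp (2*|ρ| *T)*Real.exp x) ≤ ρ*(d:ℝ) := by
            nlinarith [mul_pos (neg_pos.mpr hρdneg)
              (by linarith : (0:ℝ) < 2*(Real.exp (2*|ρ| *T)*Real.exp x) - 1)]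
          calc a*((k:ℝ)-1)/t * (Real.exp x - 1)
              ≤ a*((k:ℝ)-1)/t * (x * Real.exp x) :=
                mul_le_mul_of_nonneg_left h1 hP.le
            _ = (a*((k:ℝ)-1)/t * x) * Real.exp x := by ring
            _ = 2*ρ*(d:ℝ)*Real.exp (2*|ρ| *T) * Real.exp x := by rw [hamx]
            _ = 2*ρ*(d:ℝ)*(Real.exp (2*|ρ| *T)*Real.exp x) := by ring
            _ ≤ ρ*(d:ℝ) := h3
        calc ρ*(d:ℝ)/(Real.exp x - 1) * t ≤ a*((k:ℝ)-1)/t * t :=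
              mul_le_mul_of_nonneg_right hB'le ht.le
          _ = a*((k:ℝ)-1) := by field_simp
      · -- ρ > 0
        have hxpos : 0 < x := div_pos (by nlinarith) hm
        have hden : 0 < Real.exp x - 1 := by
          have := Real.exp_lt_exp.mpr hxpos
          rw [Real.exp_zero] at this; linarith
        have hBle : ρ*(d:ℝ)/(Real.exp x - 1) ≤ (d:ℝ)*((k:ℝ)-1)/(2*t) := by
          rw [div_le_div_iff₀ hden (by positivity)]
          have hxval : ((k:ℝ)-1) * x = 2*ρ*t := by
            rw [hx_def]; field_simp
          nlinarith [mul_nonneg (mul_nonneg (by linarith : (0:ℝ) ≤ (d:ℝ)) hm.le)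
            (by linarith [Real.add_one_le_exp x] : (0:ℝ) ≤ Real.exp x - 1 - x)]
        calc ρ*(d:ℝ)/(Real.exp x - 1) * t ≤ (d:ℝ)*((k:ℝ)-1)/(2*t) * t :=
              mul_le_mul_of_nonneg_right hBle ht.le
          _ = (d:ℝ)*((k:ℝ)-1)/2 := by field_simp
          _ ≤ a*((k:ℝ)-1) := by
              nlinarith [mul_nonneg hm.le (by nlinarith : (0:ℝ) ≤ 2*a - (d:ℝ))]
end

section
/- Let d ≥ 1 be an integer, let τ > 0, and let A ≥ 0. Then for every t ≥ τ, ( Σ_{k=1}^∞ ( d(k−1)/(2t) )^{(k−1)/2} · A^k / k! )² ≤ √(2/π) · (τ/d) · ( e^{d e A² / τ} − 1 ), where for k = 1 the factor ( d(k−1)/(2t) )^{0} is interpreted as 1 and e denotes Euler's number. -/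
open Finset

/-- Term of the exponential series is at most the exponential. -/
private lemma aux_pow_div_factorial_le_exp (x : ℝ) (hx : 0 ≤ x) (i : ℕ) :
    x ^ i / i.factorial ≤ Real.exp x := by
  have hs := Real.summable_pow_div_factorial x
  have h := Summable.le_tsum hs i (fun j _ => by positivity)
  rwa [Real.exp_eq_exp_ℝ, NormedSpace.exp_eq_tsum_div]

/-- `i^i ≤ e^i i!`. -/
private lemma aux_self_pow_le (i : ℕ) :
    (i : ℝ) ^ i ≤ Real.exp 1 ^ i * i.factorial := by
  have h := aux_pow_div_factorial_le_exp (i : ℝ) (by positivity) i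
  have hf : (0:ℝ) < i.factorial := by positivity
  rw [div_le_iff₀ hf] at h
  have he : Real.exp (i:ℝ) = Real.exp 1 ^ i := by
    rw [← Real.exp_nat_mul]; norm_num
  rwa [he] at h

/-- `2 ≤ √(2/π) e`. -/
private lemma aux_two_le : (2:ℝ) ≤ Real.sqrt (2 / Real.pi) * Real.exp 1 := by
  have he : (2.7:ℝ) < Real.exp 1 := by
    have := Real.exp_one_gt_d9; linarith
  have hpi : Real.pi < 3.15 := Real.pi_lt_d2
  have hpi0 : (0:ℝ) < Real.pi := Real.pi_pos
  have hsq : (2 / Real.exp 1) ≤ Real.sqrt (2 / Real.pi) := by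
    rw [Real.le_sqrt (by positivity) (by positivity)]
    rw [div_pow, div_le_div_iff₀ (by positivity) (by positivity)]
    nlinarith
  have he0 : (0:ℝ) < Real.exp 1 := Real.exp_pos 1
  calc (2:ℝ) = (2 / Real.exp 1) * Real.exp 1 := by field_simp
    _ ≤ Real.sqrt (2 / Real.pi) * Real.exp 1 := by
        exact mul_le_mul_of_nonneg_right hsq he0.le

/-- Key arithmetic bound: `2 i^i ≤ √(2/π) e^{i+1} (i+1)!`. -/
private lemma aux_key (i : ℕ) :
    2 * (i:ℝ)^i ≤ Real.sqrt (2 / Real.pi) * Real.exp 1 ^ (i+1) * (i+1).factorial := by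
  have h1 := aux_self_pow_le i
  have h2 := aux_two_le
  have he0 : (0:ℝ) < Real.exp 1 := Real.exp_pos 1
  have hf : (0:ℝ) < i.factorial := by positivity
  have hs0 : (0:ℝ) ≤ Real.sqrt (2 / Real.pi) := Real.sqrt_nonneg _
  have hstep : (2:ℝ) ≤ Real.sqrt (2 / Real.pi) * Real.exp 1 * (i+1) := by
    calc (2:ℝ) ≤ Real.sqrt (2 / Real.pi) * Real.exp 1 := h2
      _ = Real.sqrt (2 / Real.pi) * Real.exp 1 * 1 := by ring
      _ ≤ Real.sqrt (2 / Real.pi) * Real.exp 1 * (i+1) := by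
          have hi : (0:ℝ) ≤ (i:ℝ) := Nat.cast_nonneg i
          nlinarith
  have hexpi : (0:ℝ) < Real.exp 1 ^ i := by positivity
  have hfac : ((i+1).factorial : ℝ) = ((i:ℝ)+1) * i.factorial := by
    rw [Nat.factorial_succ]; push_cast; ring
  calc 2 * (i:ℝ)^i ≤ 2 * (Real.exp 1 ^ i * i.factorial) := by nlinarith
    _ ≤ (Real.sqrt (2 / Real.pi) * Real.exp 1 * (i+1)) * (Real.exp 1 ^ i * i.factorial) := by
        nlinarith [mul_pos hexpi hf]
    _ = Real.sqrt (2 / Real.pi) * Real.exp 1 ^ (i+1) * (i+1).factorial := by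
        rw [hfac, pow_succ]; ring

/-- For `t ≥ τ > 0` and `A ≥ 0`,
`(Σ_{k=1}^∞ (d(k−1)/(2t))^{(k−1)/2} A^k / k!)² ≤ √(2/π) (τ/d) (e^{deA²/τ} − 1)`.
The series is indexed here by `k = m + 1`, `m : ℕ`. -/
theorem stmt_1 (d : ℕ) (hd : 1 ≤ d) (τ : ℝ) (hτ : 0 < τ) (A : ℝ) (hA : 0 ≤ A) :
    ∀ t : ℝ, τ ≤ t →
      (∑' m : ℕ, ((d : ℝ) * (m : ℝ) / (2 * t)) ^ ((m : ℝ) / 2) * A ^ (m + 1) /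
          (Nat.factorial (m + 1) : ℝ)) ^ 2
        ≤ Real.sqrt (2 / Real.pi) * (τ / d) *
          (Real.exp ((d : ℝ) * Real.exp 1 * A ^ 2 / τ) - 1) := by
  intro t ht
  have ht0 : (0:ℝ) < t := lt_of_lt_of_le hτ ht
  have hd0 : (0:ℝ) < d := by exact_mod_cast hd
  set x : ℝ := (d : ℝ) * Real.exp 1 * A ^ 2 / τ with hxdef
  have hx0 : 0 ≤ x := by positivity
  set a : ℕ → ℝ := fun m => ((d : ℝ) * (m : ℝ) / (2 * t)) ^ ((m : ℝ) / 2) * A ^ (m + 1) /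
          (Nat.factorial (m + 1) : ℝ) with hadef
  set c : ℕ → ℝ := fun i => (2 * (i:ℝ)^i / ((i+1).factorial : ℝ)^2) *
      (((d:ℝ)/τ)^i * (A^2)^(i+1)) with hcdef
  set g : ℕ → ℝ := fun i => (Real.sqrt (2 / Real.pi) * Real.exp 1 ^ (i+1) / ((i+1).factorial : ℝ)) *
      (((d:ℝ)/τ)^i * (A^2)^(i+1)) with hgdef
  have ha0 : ∀ i, 0 ≤ a i := by
    intro i
    have : (0:ℝ) ≤ (d : ℝ) * (i : ℝ) / (2 * t) := by positivity
    simp only [hadef]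
    positivity
  have hc0 : ∀ i, 0 ≤ c i := by
    intro i; simp only [hcdef]; positivity
  -- g equals the convenient exponential-series form
  have hg_eq : ∀ i, g i = (Real.sqrt (2 / Real.pi) * (τ / d)) * (x^(i+1) / ((i+1).factorial : ℝ)) := by
    intro i
    have hxpow : x^(i+1) = ((d:ℝ)/τ)^(i+1) * Real.exp 1 ^ (i+1) * (A^2)^(i+1) := by
      rw [hxdef, ← mul_pow, ← mul_pow]; ring_nf
    simp only [hgdef, hxpow]
    have hdne : (d:ℝ) ≠ 0 := ne_of_gt hd0
    have hτne : τ ≠ 0 := ne_of_gt hτ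
    field_simp
    ring_nf; simp [hτne]
  -- c ≤ g termwise
  have hcg : ∀ i, c i ≤ g i := by
    intro i
    have hf : (0:ℝ) < ((i+1).factorial : ℝ) := by positivity
    have h1 : 2 * (i:ℝ)^i / ((i+1).factorial : ℝ)^2 ≤
        Real.sqrt (2 / Real.pi) * Real.exp 1 ^ (i+1) / ((i+1).factorial : ℝ) := by
      rw [div_le_div_iff₀ (by positivity) hf]
      have := aux_key i
      nlinarith [hf, this]
    exact mul_le_mul_of_nonneg_right h1 (by positivity)
  -- summability of g
  have hsumexp : Summable (fun i : ℕ => x^(i+1) / ((i+1).factorial : ℝ)) := by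
    exact (Real.summable_pow_div_factorial x).comp_injective (add_left_injective 1)
  have hgsum : Summable g := by
    have : Summable (fun i : ℕ => (Real.sqrt (2 / Real.pi) * (τ / d)) *
        (x^(i+1) / ((i+1).factorial : ℝ))) := hsumexp.mul_left _
    exact this.congr (fun i => (hg_eq i).symm)
  have hcsum : Summable c := by
    exact Summable.of_nonneg_of_le hc0 hcg hgsum
  set T : ℝ := ∑' i, c i with hTdef
  have hT0 : 0 ≤ T := tsum_nonneg hc0
  -- Cauchy-Schwarz termwise bound: 2^{i+1} a_i^2 ≤ c i
  have hterm : ∀ i : ℕ, (2:ℝ)^(i+1) * (a i)^2 ≤ c i := by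
    intro i
    have hb : (0:ℝ) ≤ (d : ℝ) * (i : ℝ) / (2 * t) := by positivity
    have hsq : (a i)^2 = ((d:ℝ)*(i:ℝ)/(2*t))^(i:ℕ) * ((A^2)^(i+1) / ((i+1).factorial : ℝ)^2) := by
      simp only [hadef]
      rw [div_pow, mul_pow, ← Real.rpow_natCast (((d:ℝ)*(i:ℝ)/(2*t)) ^ ((i:ℝ)/2)) 2,
        ← Real.rpow_mul hb]
      have h2 : ((i:ℝ)/2) * ((2:ℕ):ℝ) = ((i:ℕ):ℝ) := by push_cast; ring
      rw [h2, Real.rpow_natCast]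
      ring
    rw [hsq]
    have hpow2 : (2:ℝ)^(i+1) * ((d:ℝ)*(i:ℝ)/(2*t))^(i:ℕ) = 2 * ((d:ℝ)*(i:ℝ)/t)^(i:ℕ) := by
      have h2t : ((d:ℝ)*(i:ℝ)/(2*t)) = ((d:ℝ)*(i:ℝ)/t) / 2 := by ring
      rw [h2t, div_pow, pow_succ]
      have h2ne : ((2:ℝ)^i) ≠ 0 := by positivity
      field_simp
    have hmono : ((d:ℝ)*(i:ℝ)/t)^(i:ℕ) ≤ ((d:ℝ)*(i:ℝ)/τ)^(i:ℕ) := by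
      apply pow_le_pow_left₀ (by positivity)
      apply div_le_div_of_nonneg_left (by positivity) hτ ht
    have hci : c i = 2 * ((d:ℝ)*(i:ℝ)/τ)^(i:ℕ) * ((A^2)^(i+1) / ((i+1).factorial : ℝ)^2) := by
      simp only [hcdef]
      simp only [div_pow, mul_pow]
      ring
    calc (2:ℝ)^(i+1) * (((d:ℝ)*(i:ℝ)/(2*t))^(i:ℕ) * ((A^2)^(i+1) / ((i+1).factorial : ℝ)^2))
        = ((2:ℝ)^(i+1) * ((d:ℝ)*(i:ℝ)/(2*t))^(i:ℕ)) * ((A^2)^(i+1) / ((i+1).factorial : ℝ)^2) := by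
          ring
      _ = (2 * ((d:ℝ)*(i:ℝ)/t)^(i:ℕ)) * ((A^2)^(i+1) / ((i+1).factorial : ℝ)^2) := by
          rw [hpow2]
      _ ≤ (2 * ((d:ℝ)*(i:ℝ)/τ)^(i:ℕ)) * ((A^2)^(i+1) / ((i+1).factorial : ℝ)^2) := by
          apply mul_le_mul_of_nonneg_right (by linarith) (by positivity)
      _ = c i := by rw [hci]
  -- partial sums squared are bounded by T
  have hps : ∀ n, (∑ i ∈ range n, a i)^2 ≤ T := by
    intro n
    have hCS := sum_sq_le_sum_mul_sum_of_sq_eq_mul (range n)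
      (f := fun i => ((2:ℝ)⁻¹)^(i+1)) (g := fun i => (2:ℝ)^(i+1) * (a i)^2) (r := a)
      (fun i _ => by positivity) (fun i _ => by positivity)
      (fun i _ => by
        have : ((2:ℝ)⁻¹)^(i+1) * ((2:ℝ)^(i+1) * (a i)^2) = ((2⁻¹:ℝ) * 2)^(i+1) * (a i)^2 := by
          rw [mul_pow]; ring
        rw [this]; norm_num)
    have hgeo : ∑ i ∈ range n, ((2:ℝ)⁻¹)^(i+1) ≤ 1 := by
      have heq : ∀ m : ℕ, ∑ i ∈ range m, ((2:ℝ)⁻¹)^(i+1) = 1 - (2⁻¹:ℝ)^m := by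
        intro m
        induction m with
        | zero => simp
        | succ k ih => rw [sum_range_succ, ih, pow_succ]; ring
      rw [heq n]
      have : (0:ℝ) ≤ (2⁻¹:ℝ)^n := by positivity
      linarith
    have hsum2 : ∑ i ∈ range n, (2:ℝ)^(i+1) * (a i)^2 ≤ T := by
      calc ∑ i ∈ range n, (2:ℝ)^(i+1) * (a i)^2 ≤ ∑ i ∈ range n, c i := by
            apply sum_le_sum (fun i _ => hterm i)
        _ ≤ T := Summable.sum_le_tsum (range n) (fun i _ => hc0 i) hcsum
    calc (∑ i ∈ range n, a i)^2
        ≤ (∑ i ∈ range n, ((2:ℝ)⁻¹)^(i+1)) * ∑ i ∈ range n, (2:ℝ)^(i+1) * (a i)^2 := hCS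
      _ ≤ 1 * T := by
          apply mul_le_mul hgeo hsum2 (sum_nonneg fun i _ => by positivity) (by norm_num)
      _ = T := one_mul T
  -- hence the tsum of a is at most √T
  have hps' : ∀ n, ∑ i ∈ range n, a i ≤ Real.sqrt T := by
    intro n
    rw [Real.le_sqrt (sum_nonneg fun i _ => ha0 i) hT0]
    exact hps n
  have htsum_le : ∑' i, a i ≤ Real.sqrt T := Real.tsum_le_of_sum_range_le ha0 hps'
  have htsum0 : 0 ≤ ∑' i, a i := tsum_nonneg ha0
  have hsq_le : (∑' i, a i)^2 ≤ T := by
    calc (∑' i, a i)^2 ≤ (Real.sqrt T)^2 := by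
          apply pow_le_pow_left₀ htsum0 htsum_le
      _ = T := Real.sq_sqrt hT0
  -- compute tsum g
  have hexp_tsum : Real.exp x = ∑' n : ℕ, x^n / (n.factorial : ℝ) := by
    rw [Real.exp_eq_exp_ℝ, NormedSpace.exp_eq_tsum_div]
  have hshift : ∑' i : ℕ, x^(i+1) / ((i+1).factorial : ℝ) = Real.exp x - 1 := by
    have hsum := Real.summable_pow_div_factorial x
    have h0 := Summable.tsum_eq_zero_add hsum
    rw [← hexp_tsum] at h0
    simp only [pow_zero, Nat.factorial_zero, Nat.cast_one] at h0
    linarith [h0]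
  have hgtsum : ∑' i, g i = Real.sqrt (2 / Real.pi) * (τ / d) * (Real.exp x - 1) := by
    calc ∑' i, g i = ∑' i, (Real.sqrt (2 / Real.pi) * (τ / d)) * (x^(i+1) / ((i+1).factorial : ℝ)) := by
          exact tsum_congr hg_eq
      _ = (Real.sqrt (2 / Real.pi) * (τ / d)) * ∑' i, x^(i+1) / ((i+1).factorial : ℝ) :=
          tsum_mul_left
      _ = Real.sqrt (2 / Real.pi) * (τ / d) * (Real.exp x - 1) := by rw [hshift]
  have hTg : T ≤ Real.sqrt (2 / Real.pi) * (τ / d) * (Real.exp x - 1) := by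
    rw [← hgtsum]
    exact Summable.tsum_le_tsum hcg hcsum hgsum
  exact hsq_le.trans hTg
end

section
/- Let d ≥ 1 be an integer and let f : ℝ^d → ℝ be three times continuously differentiable with bounded third derivatives. Then there exists C > 0, depending only on d and on sup_y ‖∇³f(y)‖, such that for every x ∈ ℝ^d and every r > 0, ‖ ∫_{B(x,r)} (y − x) f(y) dy − V₂ r^{d+2} ∇f(x) ‖ ≤ C r^{d+4}, where the integral is with respect to Lebesgue measure, B(x,r) is the closed Euclidean ball of radius r centered at x, and ‖·‖ is the Euclidean norm on ℝ^d. -/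
open MeasureTheory Metric Set Pointwise
set_option maxHeartbeats 1000000

section MVTpart
variable {E : Type*} [NormedAddCommGroup E] [NormedSpace ℝ E]

lemma lip2 {f : E → ℝ} (hf : ContDiff ℝ 3 f) {M : ℝ}
    (hM : ∀ y, ‖iteratedFDeriv ℝ 3 f y‖ ≤ M) (a b : E) :
    ‖fderiv ℝ (fderiv ℝ f) a - fderiv ℝ (fderiv ℝ f) b‖ ≤ M * ‖a - b‖ := by
  have hM0 : 0 ≤ M := le_trans (norm_nonneg _) (hM a)
  have h2 : ‖iteratedFDeriv ℝ 2 f a - iteratedFDeriv ℝ 2 f b‖ ≤ M * ‖a - b‖ :=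
    Convex.norm_image_sub_le_of_norm_fderiv_le
      (fun y _ => (hf.differentiable_iteratedFDeriv (by norm_num) y))
      (fun y _ => by rw [norm_fderiv_iteratedFDeriv]; exact hM y)
      convex_univ (mem_univ _) (mem_univ _)
  refine ContinuousLinearMap.opNorm_le_bound _ (by positivity) fun u => ?_
  refine ContinuousLinearMap.opNorm_le_bound _ (by positivity) fun w => ?_
  have key : (fderiv ℝ (fderiv ℝ f) a - fderiv ℝ (fderiv ℝ f) b) u w
      = (iteratedFDeriv ℝ 2 f a - iteratedFDeriv ℝ 2 f b) ![u, w] := by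
    simp [iteratedFDeriv_two_apply]
  rw [key]
  calc ‖(iteratedFDeriv ℝ 2 f a - iteratedFDeriv ℝ 2 f b) ![u, w]‖
      ≤ ‖iteratedFDeriv ℝ 2 f a - iteratedFDeriv ℝ 2 f b‖ * (‖u‖ * ‖w‖) := by
        simpa [Fin.prod_univ_two] using
          (iteratedFDeriv ℝ 2 f a - iteratedFDeriv ℝ 2 f b).le_opNorm ![u, w]
    _ ≤ M * ‖a - b‖ * (‖u‖ * ‖w‖) := by
        apply mul_le_mul_of_nonneg_right h2 (by positivity)
    _ = M * ‖a - b‖ * ‖u‖ * ‖w‖ := by ring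

lemma key3 {f : E → ℝ} (hf : ContDiff ℝ 3 f) {M : ℝ}
    (hM : ∀ y, ‖iteratedFDeriv ℝ 3 f y‖ ≤ M) (x v : E) :
    ‖f (x + v) - f (x - v) - 2 * fderiv ℝ f x v‖ ≤ 2 * M * ‖v‖ ^ 3 := by
  have hM0 : 0 ≤ M := le_trans (norm_nonneg _) (hM x)
  set f' := fderiv ℝ f with hf'def
  set f'' := fderiv ℝ f' with hf''def
  have hf' : ContDiff ℝ 2 f' := hf.fderiv_right (by norm_num)
  have hf'd : Differentiable ℝ f' := hf'.differentiable (by norm_num)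
  have hfd : Differentiable ℝ f := hf.differentiable (by norm_num)
  set k : E → (E →L[ℝ] ℝ) := fun u => f' (x + u) + f' (x - u) - (f' x + f' x) with hkdef
  have hk : ∀ u : E, HasFDerivAt k (f'' (x + u) - f'' (x - u)) u := by
    intro u
    have h1 : HasFDerivAt (fun u : E => f' (x + u)) (f'' (x + u)) u := by
      have := (hf'd (x + u)).hasFDerivAt.comp u ((hasFDerivAt_id u).const_add x)
      simpa only [Function.comp_def, ContinuousLinearMap.comp_id] using this
    have h2 : HasFDerivAt (fun u : E => f' (x - u)) (-f'' (x - u)) u := by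
      have := (hf'd (x - u)).hasFDerivAt.comp u ((hasFDerivAt_id u).const_sub x)
      simpa only [Function.comp_def, ContinuousLinearMap.comp_neg,
        ContinuousLinearMap.comp_id] using this
    have h3 := (h1.add h2).sub_const (f' x + f' x)
    rw [sub_eq_add_neg (f'' (x + u))]
    exact h3
  have hkb : ∀ u : E, ‖f'' (x + u) - f'' (x - u)‖ ≤ 2 * M * ‖u‖ := by
    intro u
    have hl := lip2 hf hM (x + u) (x - u)
    have he : (x + u) - (x - u) = u + u := by abel
    rw [he] at hl
    calc ‖f'' (x + u) - f'' (x - u)‖ ≤ M * ‖u + u‖ := hl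
      _ ≤ M * (‖u‖ + ‖u‖) := mul_le_mul_of_nonneg_left (norm_add_le u u) hM0
      _ = 2 * M * ‖u‖ := by ring
  have hknorm : ∀ u ∈ closedBall (0:E) ‖v‖, ‖k u‖ ≤ 2 * M * ‖v‖ * ‖v‖ := by
    intro u hu
    have hu' : ‖u‖ ≤ ‖v‖ := by simpa [mem_closedBall, dist_eq_norm] using hu
    have h0 : k 0 = 0 := by simp [hkdef]
    have h1 := Convex.norm_image_sub_le_of_norm_fderiv_le
      (f := k) (fun y _ => (hk y).differentiableAt)
      (C := 2 * M * ‖v‖)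
      (fun y hy => by
        rw [(hk y).fderiv]
        have hy' : ‖y‖ ≤ ‖v‖ := by simpa [mem_closedBall, dist_eq_norm] using hy
        exact le_trans (hkb y) (by nlinarith [norm_nonneg y, norm_nonneg v]))
      (convex_closedBall (0:E) ‖v‖) (mem_closedBall_self (norm_nonneg v)) hu
    rw [h0, sub_zero, sub_zero] at h1
    exact le_trans h1 (by nlinarith [mul_nonneg (mul_nonneg hM0 (norm_nonneg v)) (sub_nonneg.mpr hu')])
  set h : E → ℝ := fun u => f (x + u) - f (x - u) - (f' x + f' x) u with hhdef
  have hh : ∀ u : E, HasFDerivAt h (k u) u := by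
    intro u
    have h1 : HasFDerivAt (fun u : E => f (x + u)) (f' (x + u)) u := by
      have := (hfd (x + u)).hasFDerivAt.comp u ((hasFDerivAt_id u).const_add x)
      simpa only [Function.comp_def, ContinuousLinearMap.comp_id] using this
    have h2 : HasFDerivAt (fun u : E => f (x - u)) (-f' (x - u)) u := by
      have := (hfd (x - u)).hasFDerivAt.comp u ((hasFDerivAt_id u).const_sub x)
      simpa only [Function.comp_def, ContinuousLinearMap.comp_neg,
        ContinuousLinearMap.comp_id] using this
    have h3 : HasFDerivAt (fun u : E => (f' x + f' x) u) (f' x + f' x) u :=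
      (f' x + f' x).hasFDerivAt
    have h4 := (h1.sub h2).sub h3
    have heq : k u = f' (x + u) - -f' (x - u) - (f' x + f' x) := by
      rw [sub_neg_eq_add]
    rw [heq]
    exact h4
  have hmv := Convex.norm_image_sub_le_of_norm_fderiv_le
    (f := h) (fun y _ => (hh y).differentiableAt)
    (C := 2 * M * ‖v‖ * ‖v‖)
    (fun y hy => by rw [(hh y).fderiv]; exact hknorm y hy)
    (convex_closedBall (0:E) ‖v‖) (mem_closedBall_self (norm_nonneg v))
    (mem_closedBall_zero_iff.mpr le_rfl)
  have h0 : h 0 = 0 := by simp [hhdef]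
  have hv : h v = f (x + v) - f (x - v) - 2 * f' x v := by
    show f (x + v) - f (x - v) - (f' x + f' x) v = _
    rw [ContinuousLinearMap.add_apply]; ring
  rw [h0, hv, sub_zero, sub_zero] at hmv
  calc ‖f (x + v) - f (x - v) - 2 * f' x v‖ ≤ 2 * M * ‖v‖ * ‖v‖ * ‖v‖ := hmv
    _ = 2 * M * ‖v‖ ^ 3 := by ring


end MVTpart

variable {d : ℕ}

local notation "E" => EuclideanSpace ℝ (Fin d)

lemma integral_comp_isometry (e : E ≃ₗᵢ[ℝ] E) (g : E → ℝ) (R : ℝ) :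
    ∫ z in closedBall (0:E) R, g (e z) = ∫ z in closedBall (0:E) R, g z := by
  have hp : e ⁻¹' closedBall (0:E) R = closedBall (0:E) R := by
    ext z
    simp [mem_closedBall_zero_iff, e.norm_map]
  have := e.measurePreserving.setIntegral_preimage_emb
    e.toHomeomorph.measurableEmbedding g (closedBall (0:E) R)
  rwa [hp] at this

lemma flip_moment {i j : Fin d} (hij : i ≠ j) (R : ℝ) :
    ∫ z in closedBall (0:E) R, z i * z j = 0 := by
  classical
  set e : E ≃ₗᵢ[ℝ] E := LinearIsometryEquiv.piLpCongrRight 2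
    (fun k : Fin d => if k = i then (LinearIsometryEquiv.neg ℝ : ℝ ≃ₗᵢ[ℝ] ℝ) else
      LinearIsometryEquiv.refl ℝ ℝ) with hedef
  have he : ∀ (z : E) (k : Fin d), e z k = if k = i then -(z k) else z k := by
    intro z k
    simp only [hedef, LinearIsometryEquiv.piLpCongrRight_apply]
    by_cases h : k = i
    · subst h; simp
    · simp [h]
  have h1 := integral_comp_isometry e (fun z => z i * z j) R
  have h2 : ∀ z : E, (e z) i * (e z) j = -(z i * z j) := by
    intro z
    rw [he z i, he z j, if_pos rfl, if_neg (by exact fun h => hij h.symm)]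
    ring
  simp only [h2] at h1
  rw [integral_neg] at h1
  linarith [h1]

lemma swap_moment (i i₀ : Fin d) (R : ℝ) :
    ∫ z in closedBall (0:E) R, (z i)^2 = ∫ z in closedBall (0:E) R, (z i₀)^2 := by
  set e : E ≃ₗᵢ[ℝ] E := LinearIsometryEquiv.piLpCongrLeft 2 ℝ ℝ (Equiv.swap i i₀) with hedef
  have he : ∀ (z : E) (k : Fin d), e z k = z (Equiv.swap i i₀ k) := by
    intro z k
    simp [hedef, LinearIsometryEquiv.piLpCongrLeft_apply, Equiv.piCongrLeft'_apply,
      Equiv.symm_swap]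
  have h1 := integral_comp_isometry e (fun z => (z i₀)^2) R
  have h2 : ∀ z : E, ((e z) i₀)^2 = (z i)^2 := by
    intro z
    rw [he z i₀, Equiv.swap_apply_right]
  simp only [h2] at h1
  exact h1

lemma scale_moment (i j : Fin d) {r : ℝ} (hr : 0 < r) :
    ∫ v in closedBall (0:E) r, v i * v j
      = r^(d+2) * ∫ z in closedBall (0:E) 1, z i * z j := by
  have hs := Measure.setIntegral_comp_smul_of_pos (volume : Measure E)
    (fun v => v i * v j) (closedBall (0:E) 1) hr
  have hball : r • closedBall (0:E) 1 = closedBall (0:E) r := by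
    rw [_root_.smul_closedBall _ _ zero_le_one, smul_zero, Real.norm_eq_abs, abs_of_pos hr, mul_one]
  rw [hball] at hs
  have hfr : ∀ z : E, (r • z) i * (r • z) j = r^2 * (z i * z j) := by
    intro z
    simp [PiLp.smul_apply, smul_eq_mul]
    ring
  simp only [hfr] at hs
  rw [integral_const_mul, finrank_euclideanSpace_fin] at hs
  have hrd : (0:ℝ) < r ^ d := pow_pos hr d
  rw [smul_eq_mul] at hs
  have : (r:ℝ)^(d+2) = r^d * r^2 := by ring
  rw [this]
  field_simp at hs ⊢
  nlinarith [hs, pow_pos hr d, pow_pos hr 2]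

lemma moment (hd : 1 ≤ d) (i j : Fin d) {r : ℝ} (hr : 0 < r) :
    ∫ v in closedBall (0:E) r, v i * v j
      = if i = j then (∫ z in closedBall (0:E) 1, (z ⟨0,hd⟩)^2) * r^(d+2) else 0 := by
  by_cases h : i = j
  · subst h
    rw [if_pos rfl, scale_moment i i hr]
    have hsq : ∀ z : E, z i * z i = (z i)^2 := fun z => (sq (z i)).symm
    simp only [hsq]
    rw [swap_moment i (⟨0,hd⟩ : Fin d) 1]
    ring
  · rw [if_neg h, scale_moment i j hr, flip_moment h, mul_zero]

lemma grad_identity (hd : 1 ≤ d) (a : E) {r : ℝ} (hr : 0 < r) :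
    ∫ v in closedBall (0:E) r, (inner ℝ a v : ℝ) • v
      = ((∫ z in closedBall (0:E) 1, (z ⟨0,hd⟩)^2) * r^(d+2)) • a := by
  have hcont : Continuous (fun v : E => (inner ℝ a v : ℝ) • v) :=
    by fun_prop
  have hInt : IntegrableOn (fun v : E => (inner ℝ a v : ℝ) • v) (closedBall (0:E) r) :=
    hcont.continuousOn.integrableOn_compact (isCompact_closedBall _ _)
  ext j
  have hproj := (EuclideanSpace.proj j (𝕜 := ℝ)).integral_comp_comm hInt
  have hL : (∫ v in closedBall (0:E) r, (inner ℝ a v : ℝ) • v) j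
      = ∫ v in closedBall (0:E) r, (inner ℝ a v : ℝ) * v j := by
    calc (∫ v in closedBall (0:E) r, (inner ℝ a v : ℝ) • v) j
        = (EuclideanSpace.proj j (𝕜 := ℝ)) (∫ v in closedBall (0:E) r, (inner ℝ a v : ℝ) • v) := rfl
      _ = ∫ v in closedBall (0:E) r, (EuclideanSpace.proj j (𝕜 := ℝ)) ((inner ℝ a v : ℝ) • v) :=
          hproj.symm
      _ = ∫ v in closedBall (0:E) r, (inner ℝ a v : ℝ) * v j := by
          congr 1
  rw [hL]
  have hinner : ∀ v : E, (inner ℝ a v : ℝ) * v j = ∑ i, a i * (v i * v j) := by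
    intro v
    rw [PiLp.inner_apply]
    simp only [RCLike.inner_apply, conj_trivial]
    rw [Finset.sum_mul]
    congr 1; ext i; ring
  simp only [hinner]
  rw [integral_finset_sum]
  · have hterm : ∀ i : Fin d, (∫ v in closedBall (0:E) r, a i * (v i * v j))
        = a i * (if i = j then (∫ z in closedBall (0:E) 1, (z ⟨0,hd⟩)^2) * r^(d+2) else 0) := by
      intro i
      rw [integral_const_mul, moment hd i j hr]
    simp only [hterm, mul_ite, mul_zero]
    rw [Finset.sum_ite_eq' Finset.univ j (fun i => a i * ((∫ z in closedBall (0:E) 1, (z ⟨0,hd⟩)^2) * r^(d+2)))]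
    simp only [Finset.mem_univ, if_pos]
    show a j * _ = (_ * r^(d+2)) • a j
    rw [smul_eq_mul]; ring
  · intro i _
    exact ((by fun_prop : Continuous (fun v : E => a i * (v i * v j))).continuousOn.integrableOn_compact
      (isCompact_closedBall _ _))

/-- First-moment ball estimate: for `f` of class `C³` with third derivatives bounded by `M₃`,
`‖∫_{B(x,r)} (y−x) f(y) dy − V₂ r^{d+2} ∇f(x)‖ ≤ C r^{d+4}` for a constant `C > 0` depending
only on `d` and `M₃`, where `V₂ = ∫_{B(0,1)} z₁² dz`. -/
theorem stmt_8 (d : ℕ) (hd : 1 ≤ d) (M₃ : ℝ) :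
    ∃ C : ℝ, 0 < C ∧
      ∀ f : EuclideanSpace ℝ (Fin d) → ℝ, ContDiff ℝ 3 f →
        (∀ y, ‖iteratedFDeriv ℝ 3 f y‖ ≤ M₃) →
      ∀ (x : EuclideanSpace ℝ (Fin d)) (r : ℝ), 0 < r →
        ‖(∫ y in Metric.closedBall x r, f y • (y - x)) -
            ((∫ z in Metric.closedBall (0 : EuclideanSpace ℝ (Fin d)) 1, (z ⟨0, hd⟩) ^ 2) *
              r ^ (d + 2)) • gradient f x‖
          ≤ C * r ^ (d + 4) := by
  set vol1 : ℝ := (volume (closedBall (0:EuclideanSpace ℝ (Fin d)) 1)).toReal with hvol1def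
  have hvol1 : 0 ≤ vol1 := ENNReal.toReal_nonneg
  refine ⟨(max M₃ 0 + 1) * (vol1 + 1), by nlinarith [le_max_right M₃ 0], ?_⟩
  intro f hf hM x r hr
  set M := max M₃ 0 with hMdef
  have hM' : ∀ y, ‖iteratedFDeriv ℝ 3 f y‖ ≤ M := fun y => (hM y).trans (le_max_left _ _)
  have hM0 : 0 ≤ M := le_max_right _ _
  set V₂ : ℝ := ∫ z in closedBall (0:EuclideanSpace ℝ (Fin d)) 1, (z (⟨0, hd⟩ : Fin d))^2 with hV₂def
  set a : EuclideanSpace ℝ (Fin d) := gradient f x with hadef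
  have hfd : Differentiable ℝ f := hf.differentiable (by norm_num)
  have hc : Continuous f := hf.continuous
  have hinner : ∀ v : EuclideanSpace ℝ (Fin d), fderiv ℝ f x v = (inner ℝ a v : ℝ) := by
    intro v
    rw [hadef]
    rw [gradient]
    rw [InnerProductSpace.toDual_symm_apply]
  -- translation
  have hI1 : (∫ y in closedBall x r, f y • (y - x)) = ∫ v in closedBall (0:EuclideanSpace ℝ (Fin d)) r, f (x + v) • v := by
    have h := (measurePreserving_add_left (volume : Measure (EuclideanSpace ℝ (Fin d))) x).setIntegral_preimage_emb
      (Homeomorph.addLeft x).measurableEmbedding (fun y => f y • (y - x)) (closedBall x r)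
    have hp : ((x + ·) : EuclideanSpace ℝ (Fin d) → EuclideanSpace ℝ (Fin d)) ⁻¹' closedBall x r = closedBall (0:EuclideanSpace ℝ (Fin d)) r := by
      ext v
      simp [mem_closedBall, dist_eq_norm]
    rw [hp] at h
    rw [← h]
    congr 1
    ext v
    rw [add_sub_cancel_left]
  -- negation
  have hI2 : (∫ v in closedBall (0:EuclideanSpace ℝ (Fin d)) r, f (x + v) • v)
      = - ∫ v in closedBall (0:EuclideanSpace ℝ (Fin d)) r, f (x - v) • v := by
    have h := (Measure.measurePreserving_neg (volume : Measure (EuclideanSpace ℝ (Fin d)))).setIntegral_preimage_emb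
      (Homeomorph.neg (EuclideanSpace ℝ (Fin d))).measurableEmbedding (fun v => f (x + v) • v) (closedBall (0:EuclideanSpace ℝ (Fin d)) r)
    have hp : (Neg.neg : EuclideanSpace ℝ (Fin d) → EuclideanSpace ℝ (Fin d)) ⁻¹' closedBall (0:EuclideanSpace ℝ (Fin d)) r = closedBall (0:EuclideanSpace ℝ (Fin d)) r := by
      ext v
      simp [mem_closedBall_zero_iff]
    rw [hp] at h
    rw [← h, ← integral_neg]
    congr 1
    ext v
    rw [← sub_eq_add_neg, smul_neg]
  -- integrabilities
  have int1 : IntegrableOn (fun v : EuclideanSpace ℝ (Fin d) => f (x + v) • v) (closedBall (0:EuclideanSpace ℝ (Fin d)) r) :=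
    ((hc.comp (continuous_const.add continuous_id)).smul continuous_id).continuousOn.integrableOn_compact
      (isCompact_closedBall _ _)
  have int2 : IntegrableOn (fun v : EuclideanSpace ℝ (Fin d) => f (x - v) • v) (closedBall (0:EuclideanSpace ℝ (Fin d)) r) :=
    ((hc.comp (continuous_const.sub continuous_id)).smul continuous_id).continuousOn.integrableOn_compact
      (isCompact_closedBall _ _)
  have int3 : IntegrableOn (fun v : EuclideanSpace ℝ (Fin d) => (2 * fderiv ℝ f x v) • v) (closedBall (0:EuclideanSpace ℝ (Fin d)) r) :=
    ((continuous_const.mul (fderiv ℝ f x).continuous).smul continuous_id).continuousOn.integrableOn_compact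
      (isCompact_closedBall _ _)
  have hsplit : (∫ v in closedBall (0:EuclideanSpace ℝ (Fin d)) r, (f (x + v) - f (x - v) - 2 * fderiv ℝ f x v) • v)
      = (∫ v in closedBall (0:EuclideanSpace ℝ (Fin d)) r, f (x + v) • v) - (∫ v in closedBall (0:EuclideanSpace ℝ (Fin d)) r, f (x - v) • v)
        - (∫ v in closedBall (0:EuclideanSpace ℝ (Fin d)) r, (2 * fderiv ℝ f x v) • v) := by
    have i12 : IntegrableOn (fun v : EuclideanSpace ℝ (Fin d) => f (x + v) • v - f (x - v) • v)
        (closedBall (0:EuclideanSpace ℝ (Fin d)) r) := int1.sub int2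
    have hfun : (fun v : EuclideanSpace ℝ (Fin d) =>
          (f (x + v) - f (x - v) - 2 * fderiv ℝ f x v) • v)
        = fun v : EuclideanSpace ℝ (Fin d) =>
            (f (x + v) • v - f (x - v) • v) - (2 * fderiv ℝ f x v) • v := by
      funext v
      rw [sub_smul, sub_smul]
    rw [hfun, integral_sub i12 int3, integral_sub int1 int2]
  have hT : (∫ v in closedBall (0:EuclideanSpace ℝ (Fin d)) r, (2 * fderiv ℝ f x v) • v)
      = (2:ℝ) • ((V₂ * r^(d+2)) • a) := by
    have h1 : (fun v : EuclideanSpace ℝ (Fin d) => (2 * fderiv ℝ f x v) • v)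
        = fun v : EuclideanSpace ℝ (Fin d) => (2:ℝ) • ((inner ℝ a v : ℝ) • v) := by
      ext v
      rw [hinner v, smul_smul]
    rw [h1, integral_smul, grad_identity hd a hr]
  have main_eq : (∫ y in closedBall x r, f y • (y - x)) - (V₂ * r^(d+2)) • a
      = (2⁻¹ : ℝ) • ∫ v in closedBall (0:EuclideanSpace ℝ (Fin d)) r, (f (x + v) - f (x - v) - 2 * fderiv ℝ f x v) • v := by
    rw [hsplit, hT, hI1]
    have hneg : (∫ v in closedBall (0:EuclideanSpace ℝ (Fin d)) r, f (x - v) • v)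
        = - ∫ v in closedBall (0:EuclideanSpace ℝ (Fin d)) r, f (x + v) • v := by
      rw [hI2, neg_neg]
    rw [hneg]
    generalize (∫ v in closedBall (0:EuclideanSpace ℝ (Fin d)) r, f (x + v) • v) = J
    generalize ((V₂ * r^(d+2)) • a) = T
    module
  have hbound : ∀ v ∈ closedBall (0:EuclideanSpace ℝ (Fin d)) r,
      ‖(f (x + v) - f (x - v) - 2 * fderiv ℝ f x v) • v‖ ≤ 2 * M * r^4 := by
    intro v hv
    have hv' : ‖v‖ ≤ r := mem_closedBall_zero_iff.mp hv
    have hkey := key3 hf hM' x v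
    rw [norm_smul]
    have h1 : ‖f (x + v) - f (x - v) - 2 * fderiv ℝ f x v‖ * ‖v‖ ≤ (2 * M * ‖v‖^3) * ‖v‖ :=
      mul_le_mul_of_nonneg_right hkey (norm_nonneg v)
    refine h1.trans ?_
    have h2 : ‖v‖^3 * ‖v‖ = ‖v‖^4 := by ring
    have h3 : ‖v‖^4 ≤ r^4 := pow_le_pow_left₀ (norm_nonneg v) hv' 4
    nlinarith [norm_nonneg v, pow_nonneg (norm_nonneg v) 3, pow_nonneg (norm_nonneg v) 4]
  have hmeas : (volume (closedBall (0:EuclideanSpace ℝ (Fin d)) r)).toReal = r^d * vol1 := by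
    rw [Measure.addHaar_closedBall' (volume : Measure (EuclideanSpace ℝ (Fin d))) (0:EuclideanSpace ℝ (Fin d)) hr.le]
    rw [ENNReal.toReal_mul, ENNReal.toReal_ofReal (pow_nonneg hr.le _), finrank_euclideanSpace_fin]
  have hnormint : ‖∫ v in closedBall (0:EuclideanSpace ℝ (Fin d)) r, (f (x + v) - f (x - v) - 2 * fderiv ℝ f x v) • v‖
      ≤ (2 * M * r^4) * (r^d * vol1) := by
    rw [← hmeas]
    exact norm_setIntegral_le_of_norm_le_const measure_closedBall_lt_top hbound
  rw [main_eq, norm_smul]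
  have h2inv : ‖(2⁻¹ : ℝ)‖ = 2⁻¹ := by norm_num
  rw [h2inv]
  have hrp : (0:ℝ) < r^(d+4) := pow_pos hr _
  have hpow : r^4 * r^d = r^(d+4) := by rw [← pow_add]; ring_nf
  calc 2⁻¹ * ‖∫ v in closedBall (0:EuclideanSpace ℝ (Fin d)) r, (f (x + v) - f (x - v) - 2 * fderiv ℝ f x v) • v‖
      ≤ 2⁻¹ * ((2 * M * r^4) * (r^d * vol1)) := by
        exact mul_le_mul_of_nonneg_left hnormint (by norm_num)
    _ = M * vol1 * (r^4 * r^d) := by ring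
    _ = M * vol1 * r^(d+4) := by rw [hpow]
    _ ≤ (M + 1) * (vol1 + 1) * r^(d+4) := by nlinarith [hrp, hM0, hvol1, mul_nonneg (by linarith : (0:ℝ) ≤ M + vol1 + 1) hrp.le]
    _ = (max M₃ 0 + 1) * (vol1 + 1) * r^(d+4) := by rw [hMdef]
end

section
/- Let d ≥ 1 be an integer and let f : ℝ^d → ℝ be twice continuously differentiable with bounded second derivatives. Then there exists C > 0, depending only on d and on sup_y ‖∇²f(y)‖, such that for every x ∈ ℝ^d and every r > 0, ‖ ∫_{B(x,r)} (y − x)(y − x)^T f(y) dy − V₂ r^{d+2} f(x) I_d ‖ ≤ C r^{d+4}, where the integral is entrywise with respect to Lebesgue measure, I_d is the d×d identity matrix, and ‖·‖ is the Frobenius (Hilbert–Schmidt) matrix norm. -/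
open MeasureTheory Metric Pointwise

section Aux

lemma coord_abs_le_norm {d : ℕ} (z : EuclideanSpace ℝ (Fin d)) (i : Fin d) : |z i| ≤ ‖z‖ := by
  rw [EuclideanSpace.norm_eq]
  have h1 : |z i| = Real.sqrt (‖z i‖ ^ 2) := by
    rw [Real.sqrt_sq_eq_abs, Real.norm_eq_abs, abs_abs]
  rw [h1]
  apply Real.sqrt_le_sqrt
  exact Finset.single_le_sum (f := fun k => ‖z k‖ ^ 2) (fun k _ => by positivity) (Finset.mem_univ i)

lemma isom_setIntegral {d : ℕ} (e : EuclideanSpace ℝ (Fin d) ≃ₗᵢ[ℝ] EuclideanSpace ℝ (Fin d))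
    (g : EuclideanSpace ℝ (Fin d) → ℝ) (r : ℝ) :
    ∫ z in closedBall (0 : EuclideanSpace ℝ (Fin d)) r, g (e z) =
      ∫ z in closedBall (0 : EuclideanSpace ℝ (Fin d)) r, g z := by
  have hpre : e ⁻¹' closedBall (0 : EuclideanSpace ℝ (Fin d)) r = closedBall 0 r := by
    ext z
    simp [mem_closedBall, dist_zero_right, e.norm_map]
  have := e.measurePreserving.setIntegral_preimage_emb
    e.toHomeomorph.measurableEmbedding g (closedBall (0 : EuclideanSpace ℝ (Fin d)) r)
  rwa [hpre] at this

lemma odd_cubic_vanish {d : ℕ} (i j : Fin d) (L : EuclideanSpace ℝ (Fin d) →L[ℝ] ℝ) (r : ℝ) :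
    ∫ z in closedBall (0 : EuclideanSpace ℝ (Fin d)) r, z i * z j * L z = 0 := by
  set g : EuclideanSpace ℝ (Fin d) → ℝ := fun z => z i * z j * L z with hg
  have h := isom_setIntegral (LinearIsometryEquiv.neg ℝ (E := EuclideanSpace ℝ (Fin d))) g r
  have hneg : ∀ z : EuclideanSpace ℝ (Fin d),
      g (LinearIsometryEquiv.neg ℝ (E := EuclideanSpace ℝ (Fin d)) z) = - g z := by
    intro z
    simp only [hg, LinearIsometryEquiv.coe_neg, PiLp.neg_apply, map_neg]
    ring
  simp only [hneg] at h
  rw [integral_neg] at h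
  linarith

lemma offdiag_vanish {d : ℕ} (i j : Fin d) (hij : i ≠ j) (r : ℝ) :
    ∫ z in closedBall (0 : EuclideanSpace ℝ (Fin d)) r, z i * z j = 0 := by
  classical
  set e : EuclideanSpace ℝ (Fin d) ≃ₗᵢ[ℝ] EuclideanSpace ℝ (Fin d) :=
    LinearIsometryEquiv.piLpCongrRight 2
      (fun k => if k = i then LinearIsometryEquiv.neg ℝ (E := ℝ) else
        LinearIsometryEquiv.refl ℝ ℝ) with he
  set g : EuclideanSpace ℝ (Fin d) → ℝ := fun z => z i * z j with hg
  have h := isom_setIntegral e g r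
  have hneg : ∀ z : EuclideanSpace ℝ (Fin d), g (e z) = - g z := by
    intro z
    have h1 : e z i = -(z i) := by
      simp [he, LinearIsometryEquiv.piLpCongrRight_apply]
    have h2 : e z j = z j := by
      simp [he, LinearIsometryEquiv.piLpCongrRight_apply, hij.symm]
    simp only [hg, h1, h2]
    ring
  simp only [hneg] at h
  rw [integral_neg] at h
  linarith

lemma swap_coord {d : ℕ} (hd : 1 ≤ d) (i : Fin d) (r : ℝ) :
    ∫ z in closedBall (0 : EuclideanSpace ℝ (Fin d)) r, (z i) ^ 2 =
      ∫ z in closedBall (0 : EuclideanSpace ℝ (Fin d)) r, (z ⟨0, hd⟩) ^ 2 := by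
  classical
  set e : EuclideanSpace ℝ (Fin d) ≃ₗᵢ[ℝ] EuclideanSpace ℝ (Fin d) :=
    LinearIsometryEquiv.piLpCongrLeft 2 ℝ ℝ (Equiv.swap i ⟨0, hd⟩) with he
  have h := isom_setIntegral e (fun z => (z i) ^ 2) r
  have key : ∀ z : EuclideanSpace ℝ (Fin d), e z i = z ⟨0, hd⟩ := by
    intro z
    simp [he, LinearIsometryEquiv.piLpCongrLeft_apply, Equiv.piCongrLeft'_apply,
      Equiv.swap_apply_left]
  simp only [key] at h
  exact h.symm

lemma scale_coord {d : ℕ} (i : Fin d) {r : ℝ} (hr : 0 < r) :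
    ∫ z in closedBall (0 : EuclideanSpace ℝ (Fin d)) r, (z i) ^ 2 =
      r ^ (d + 2) * ∫ z in closedBall (0 : EuclideanSpace ℝ (Fin d)) 1, (z i) ^ 2 := by
  have h := Measure.setIntegral_comp_smul_of_pos (volume : Measure (EuclideanSpace ℝ (Fin d)))
    (fun z : EuclideanSpace ℝ (Fin d) => (z i) ^ 2) (closedBall (0 : EuclideanSpace ℝ (Fin d)) 1) hr
  have hball : r • closedBall (0 : EuclideanSpace ℝ (Fin d)) 1 = closedBall 0 r := by
    rw [_root_.smul_closedBall _ _ zero_le_one, smul_zero]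
    simp [abs_of_pos hr]
  have hsmul : ∀ z : EuclideanSpace ℝ (Fin d), ((r • z) i) ^ 2 = r ^ 2 * (z i) ^ 2 := by
    intro z
    have : (r • z) i = r * z i := rfl
    rw [this]; ring
  rw [hball] at h
  simp only [hsmul] at h
  rw [integral_const_mul, finrank_euclideanSpace_fin, smul_eq_mul] at h
  have hrd : (0:ℝ) < r ^ d := pow_pos hr d
  field_simp at h
  rw [pow_add]
  nlinarith [h]

lemma translate_ball {d : ℕ} (x : EuclideanSpace ℝ (Fin d)) (r : ℝ)
    (G : EuclideanSpace ℝ (Fin d) → ℝ) :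
    ∫ y in closedBall x r, G (y - x) = ∫ z in closedBall (0 : EuclideanSpace ℝ (Fin d)) r, G z := by
  have mp : MeasurePreserving (fun z : EuclideanSpace ℝ (Fin d) => z + x) volume volume :=
    measurePreserving_add_right volume x
  have emb : MeasurableEmbedding (fun z : EuclideanSpace ℝ (Fin d) => z + x) :=
    (Homeomorph.addRight x).measurableEmbedding
  have hpre : (fun z : EuclideanSpace ℝ (Fin d) => z + x) ⁻¹' closedBall x r = closedBall 0 r := by
    ext z
    simp [mem_closedBall, dist_eq_norm]
  have h := mp.setIntegral_preimage_emb emb (fun y => G (y - x)) (closedBall x r)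
  rw [hpre] at h
  rw [← h]
  simp

lemma taylor_bound {d : ℕ} {M₂ : ℝ} {f : EuclideanSpace ℝ (Fin d) → ℝ}
    (hf : ContDiff ℝ 2 f) (h2 : ∀ y, ‖iteratedFDeriv ℝ 2 f y‖ ≤ M₂)
    (x y : EuclideanSpace ℝ (Fin d)) :
    |f y - f x - fderiv ℝ f x (y - x)| ≤ M₂ * ‖y - x‖ ^ 2 := by
  have hdf : Differentiable ℝ f := hf.differentiable (by norm_num)
  have hdf' : Differentiable ℝ (fderiv ℝ f) :=
    (hf.fderiv_right (m := 1) (by norm_num)).differentiable (by norm_num)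
  have hM : 0 ≤ M₂ := (norm_nonneg _).trans (h2 x)
  have hd2 : ∀ z, ‖fderiv ℝ (fderiv ℝ f) z‖ ≤ M₂ := by
    intro z
    refine ContinuousLinearMap.opNorm_le_bound _ ((norm_nonneg _).trans (h2 z)) fun v => ?_
    refine ContinuousLinearMap.opNorm_le_bound _ (by positivity) fun w => ?_
    have : fderiv ℝ (fderiv ℝ f) z v w = iteratedFDeriv ℝ 2 f z ![v, w] := by
      rw [iteratedFDeriv_two_apply]
      simp
    rw [this]
    calc ‖iteratedFDeriv ℝ 2 f z ![v, w]‖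
        ≤ ‖iteratedFDeriv ℝ 2 f z‖ * ∏ k, ‖(![v, w]) k‖ :=
          (iteratedFDeriv ℝ 2 f z).le_opNorm _
      _ ≤ M₂ * (‖v‖ * ‖w‖) := by
          rw [Fin.prod_univ_two]
          simp only [Matrix.cons_val_zero, Matrix.cons_val_one, Matrix.head_cons]
          exact mul_le_mul_of_nonneg_right (h2 z) (by positivity)
      _ = M₂ * ‖v‖ * ‖w‖ := by ring
  have hlip : ∀ a b : EuclideanSpace ℝ (Fin d), ‖fderiv ℝ f a - fderiv ℝ f b‖ ≤ M₂ * ‖a - b‖ := by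
    intro a b
    exact (convex_univ).norm_image_sub_le_of_norm_fderiv_le
      (fun z _ => hdf' z) (fun z _ => hd2 z) trivial trivial
  set L := fderiv ℝ f x with hL
  set g : EuclideanSpace ℝ (Fin d) → ℝ := fun z => f z - L (z - x) with hg
  have hgd : ∀ z, HasFDerivAt g (fderiv ℝ f z - L) z := by
    intro z
    have h1 : HasFDerivAt f (fderiv ℝ f z) z := (hdf z).hasFDerivAt
    have h2' : HasFDerivAt (fun w : EuclideanSpace ℝ (Fin d) => L (w - x)) L z := by
      have hsub : HasFDerivAt (fun w : EuclideanSpace ℝ (Fin d) => w - x)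
          (ContinuousLinearMap.id ℝ _) z := (hasFDerivAt_id z).sub_const x
      exact L.hasFDerivAt.comp z hsub
    exact h1.sub h2'
  have key : ‖g y - g x‖ ≤ (M₂ * ‖y - x‖) * ‖y - x‖ := by
    refine (convex_closedBall x ‖y - x‖).norm_image_sub_le_of_norm_hasFDerivWithin_le
      (fun z _ => (hgd z).hasFDerivWithinAt) (fun z hz => ?_) (mem_closedBall_self (by positivity))
      (by simp [mem_closedBall, dist_eq_norm])
    calc ‖fderiv ℝ f z - L‖ ≤ M₂ * ‖z - x‖ := hlip z x
      _ ≤ M₂ * ‖y - x‖ := by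
          have : ‖z - x‖ ≤ ‖y - x‖ := by simpa [mem_closedBall, dist_eq_norm] using hz
          exact mul_le_mul_of_nonneg_left this hM
  have heq : g y - g x = f y - f x - L (y - x) := by
    simp only [hg, map_sub]
    ring
  rw [heq] at key
  calc |f y - f x - L (y - x)| ≤ (M₂ * ‖y - x‖) * ‖y - x‖ := key
    _ = M₂ * ‖y - x‖ ^ 2 := by ring

end Aux

set_option maxHeartbeats 2000000 in
/-- Second-moment ball estimate: for `f` of class `C²` with second derivatives bounded by `M₂`,
the matrix `∫_{B(x,r)} (y−x)(y−x)^T f(y) dy` is within `C r^{d+4}` (Frobenius norm) of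
`V₂ r^{d+2} f(x) I_d`, with `C > 0` depending only on `d` and `M₂`,
where `V₂ = ∫_{B(0,1)} z₁² dz`. -/
theorem stmt_9 (d : ℕ) (hd : 1 ≤ d) (M₂ : ℝ) :
    ∃ C : ℝ, 0 < C ∧
      ∀ f : EuclideanSpace ℝ (Fin d) → ℝ, ContDiff ℝ 2 f →
        (∀ y, ‖iteratedFDeriv ℝ 2 f y‖ ≤ M₂) →
      ∀ (x : EuclideanSpace ℝ (Fin d)) (r : ℝ), 0 < r →
        Real.sqrt (∑ i : Fin d, ∑ j : Fin d,
            ((∫ y in Metric.closedBall x r, (y - x) i * (y - x) j * f y) -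
              (if i = j then
                (∫ z in Metric.closedBall (0 : EuclideanSpace ℝ (Fin d)) 1, (z ⟨0, hd⟩) ^ 2) *
                  r ^ (d + 2) * f x
              else 0)) ^ 2)
          ≤ C * r ^ (d + 4) := by
  classical
  set K : ℝ := (volume (closedBall (0 : EuclideanSpace ℝ (Fin d)) 1)).toReal with hK
  have hK0 : 0 ≤ K := ENNReal.toReal_nonneg
  set A : ℝ := |M₂| * K with hA
  have hA0 : 0 ≤ A := by positivity
  refine ⟨(d : ℝ) * A + 1, by positivity, ?_⟩
  intro f hf h2 x r hr
  set V₂ : ℝ := ∫ z in closedBall (0 : EuclideanSpace ℝ (Fin d)) 1, (z ⟨0, hd⟩) ^ 2 with hV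
  set L := fderiv ℝ f x with hL
  set ρ : EuclideanSpace ℝ (Fin d) → ℝ := fun z => f (x + z) - f x - L z with hρ
  -- continuity facts
  have hcf : Continuous f := hf.continuous
  have hci : ∀ i : Fin d, Continuous fun z : EuclideanSpace ℝ (Fin d) => z i := fun i =>
    (EuclideanSpace.proj i).continuous
  have hcρ : Continuous ρ := by
    refine ((hcf.comp (continuous_const.add continuous_id)).sub continuous_const).sub L.continuous
  have hcomp : IsCompact (closedBall (0 : EuclideanSpace ℝ (Fin d)) r) := isCompact_closedBall _ _
  have hint : ∀ g : EuclideanSpace ℝ (Fin d) → ℝ, Continuous g →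
      IntegrableOn g (closedBall (0 : EuclideanSpace ℝ (Fin d)) r) volume := fun g hg =>
    hg.continuousOn.integrableOn_compact hcomp
  -- the entrywise bound
  have entry : ∀ i j : Fin d,
      |(∫ y in closedBall x r, (y - x) i * (y - x) j * f y) -
        (if i = j then V₂ * r ^ (d + 2) * f x else 0)| ≤ A * r ^ (d + 4) := by
    intro i j
    -- translation
    have h1 : (∫ y in closedBall x r, (y - x) i * (y - x) j * f y) =
        ∫ z in closedBall (0 : EuclideanSpace ℝ (Fin d)) r, z i * z j * f (x + z) := by
      rw [← translate_ball x r (fun z => z i * z j * f (x + z))]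
      refine integral_congr_ae (Filter.Eventually.of_forall fun y => ?_)
      have : x + (y - x) = y := by abel
      simp only [this]
    -- splitting
    have hint1 : IntegrableOn (fun z : EuclideanSpace ℝ (Fin d) => z i * z j * (f x + L z))
        (closedBall 0 r) volume :=
      hint _ (((hci i).mul (hci j)).mul (continuous_const.add L.continuous))
    have hint2 : IntegrableOn (fun z : EuclideanSpace ℝ (Fin d) => z i * z j * ρ z)
        (closedBall 0 r) volume := hint _ (((hci i).mul (hci j)).mul hcρ)
    have h2' : (∫ z in closedBall (0 : EuclideanSpace ℝ (Fin d)) r, z i * z j * f (x + z)) =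
        (∫ z in closedBall (0 : EuclideanSpace ℝ (Fin d)) r, z i * z j * (f x + L z)) +
        (∫ z in closedBall (0 : EuclideanSpace ℝ (Fin d)) r, z i * z j * ρ z) := by
      rw [← integral_add hint1 hint2]
      refine integral_congr_ae (Filter.Eventually.of_forall fun z => ?_)
      simp only [hρ]
      ring
    -- the linear part
    have hlin : (∫ z in closedBall (0 : EuclideanSpace ℝ (Fin d)) r, z i * z j * (f x + L z)) =
        (if i = j then V₂ * r ^ (d + 2) * f x else 0) := by
      have hintc : IntegrableOn (fun z : EuclideanSpace ℝ (Fin d) => z i * z j * f x)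
          (closedBall 0 r) volume := hint _ (((hci i).mul (hci j)).mul continuous_const)
      have hintl : IntegrableOn (fun z : EuclideanSpace ℝ (Fin d) => z i * z j * L z)
          (closedBall 0 r) volume := hint _ (((hci i).mul (hci j)).mul L.continuous)
      have hsplit : (∫ z in closedBall (0 : EuclideanSpace ℝ (Fin d)) r, z i * z j * (f x + L z)) =
          (∫ z in closedBall (0 : EuclideanSpace ℝ (Fin d)) r, z i * z j * f x) +
          (∫ z in closedBall (0 : EuclideanSpace ℝ (Fin d)) r, z i * z j * L z) := by
        rw [← integral_add hintc hintl]
        refine integral_congr_ae (Filter.Eventually.of_forall fun z => ?_)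
        ring
      rw [hsplit, odd_cubic_vanish i j L r, add_zero, integral_mul_const]
      by_cases hij : i = j
      · subst hij
        have : (∫ z in closedBall (0 : EuclideanSpace ℝ (Fin d)) r, z i * z i) =
            ∫ z in closedBall (0 : EuclideanSpace ℝ (Fin d)) r, (z i) ^ 2 := by
          refine integral_congr_ae (Filter.Eventually.of_forall fun z => ?_)
          ring
        rw [this, swap_coord hd i r, scale_coord _ hr, ← hV, if_pos rfl]
        ring
      · rw [offdiag_vanish i j hij r, if_neg hij, zero_mul]
    -- the remainder bound
    have hvol : (volume (closedBall (0 : EuclideanSpace ℝ (Fin d)) r)).toReal = r ^ d * K := by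
      rw [Measure.addHaar_closedBall' _ _ hr.le, finrank_euclideanSpace_fin,
        ENNReal.toReal_mul, ENNReal.toReal_ofReal (by positivity)]
    have hrem : |∫ z in closedBall (0 : EuclideanSpace ℝ (Fin d)) r, z i * z j * ρ z| ≤
        A * r ^ (d + 4) := by
      have hb : ∀ z ∈ closedBall (0 : EuclideanSpace ℝ (Fin d)) r,
          ‖z i * z j * ρ z‖ ≤ r * r * (|M₂| * r ^ 2) := by
        intro z hz
        have hzr : ‖z‖ ≤ r := by simpa [mem_closedBall, dist_zero_right] using hz
        have hzi : |z i| ≤ r := (coord_abs_le_norm z i).trans hzr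
        have hzj : |z j| ≤ r := (coord_abs_le_norm z j).trans hzr
        have hρb : |ρ z| ≤ |M₂| * r ^ 2 := by
          have ht := taylor_bound hf h2 x (x + z)
          have hxz : x + z - x = z := by abel
          rw [hxz] at ht
          have : M₂ * ‖z‖ ^ 2 ≤ |M₂| * r ^ 2 := by
            have h1 : M₂ ≤ |M₂| := le_abs_self M₂
            have h2'' : ‖z‖ ^ 2 ≤ r ^ 2 := by
              apply pow_le_pow_left₀ (norm_nonneg z) hzr
            nlinarith [norm_nonneg z, abs_nonneg M₂, sq_nonneg ‖z‖]
          exact (ht.trans this)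
        have h0r : (0:ℝ) ≤ r := hr.le
        calc ‖z i * z j * ρ z‖ = |z i| * |z j| * |ρ z| := by
              rw [Real.norm_eq_abs, abs_mul, abs_mul]
          _ ≤ r * r * (|M₂| * r ^ 2) := by
              apply mul_le_mul (mul_le_mul hzi hzj (abs_nonneg _) h0r) hρb (abs_nonneg _)
              positivity
      have hns := norm_setIntegral_le_of_norm_le_const (μ := volume)
        (hcomp.measure_lt_top) hb
      rw [Real.norm_eq_abs, measureReal_def] at hns
      refine hns.trans ?_
      rw [hvol, hA]
      have : r * r * (|M₂| * r ^ 2) * (r ^ d * K) = |M₂| * K * (r ^ d * r ^ 4) := by ring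
      rw [this, ← pow_add]
    rw [h1, h2', hlin]
    simpa using hrem
  -- assemble
  set P : ℝ := r ^ (d + 4) with hP
  have hP0 : 0 < P := pow_pos hr _
  have hsum : (∑ i : Fin d, ∑ j : Fin d,
      ((∫ y in closedBall x r, (y - x) i * (y - x) j * f y) -
        (if i = j then V₂ * r ^ (d + 2) * f x else 0)) ^ 2) ≤ ((d : ℝ) * (A * P)) ^ 2 := by
    calc (∑ i : Fin d, ∑ j : Fin d,
        ((∫ y in closedBall x r, (y - x) i * (y - x) j * f y) -
          (if i = j then V₂ * r ^ (d + 2) * f x else 0)) ^ 2)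
        ≤ ∑ _i : Fin d, ∑ _j : Fin d, (A * P) ^ 2 := by
          refine Finset.sum_le_sum fun i _ => Finset.sum_le_sum fun j _ => ?_
          rw [← sq_abs]
          exact pow_le_pow_left₀ (abs_nonneg _) (entry i j) 2
      _ = (d : ℝ) * ((d : ℝ) * (A * P) ^ 2) := by
          simp [Finset.sum_const, Finset.card_univ]
          try ring
      _ ≤ ((d : ℝ) * (A * P)) ^ 2 := by
          have hd1 : (1 : ℝ) ≤ (d : ℝ) := by exact_mod_cast hd
          nlinarith [sq_nonneg (A * P), mul_nonneg hA0 hP0.le]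
  have hfinal := Real.sqrt_le_sqrt hsum
  rw [Real.sqrt_sq (by positivity)] at hfinal
  refine hfinal.trans ?_
  calc (d : ℝ) * (A * P) = ((d : ℝ) * A) * P := by ring
    _ ≤ ((d : ℝ) * A + 1) * P := by nlinarith [hP0.le]
end
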